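/- Let m and n be positive integers and let ⊗ : U_m × U_n → U_{mn} be the continuous homomorphism given by the Kronecker product (A,B) ↦ A ⊗ B. Then for every i ≥ 1, every x ∈ π_i(U_m) and every y ∈ π_i(U_n), one has π_i(⊗)(x,y) = π_i(⊕^n)(x) · π_i(⊕^m)(y) in the group π_i(U_{mn}), where ⊕^n : U_m → U_{mn} is the n-fold block-diagonal sum A ↦ diag(A,…,A) and ⊕^m : U_n → U_{mn} is the m-fold block-diagonal sum B ↦ diag(B,…,B). -/

import Mathlib

open Matrix Kronecker unitInterval Topology

noncomputable section

/-- The unitary group `U_n` of `n × n` complex matrices, with the subspace topology,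
based at the identity matrix. -/
abbrev U (n : ℕ) : Type := Matrix.unitaryGroup (Fin n) ℂ

namespace Paper

/-! ### Reindexing unitary matrices -/

/-- Reindexing a unitary matrix along an equivalence of index types. -/
def uReindex {ι κ : Type} [Fintype ι] [DecidableEq ι] [Fintype κ] [DecidableEq κ]
    (e : ι ≃ κ) (A : Matrix.unitaryGroup ι ℂ) : Matrix.unitaryGroup κ ℂ :=
  ⟨Matrix.reindex e e A.1, by
    rw [Matrix.mem_unitaryGroup_iff]
    have h : star ((Matrix.reindex e e) A.1) = Matrix.reindex e e (star A.1) := by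
      simp [Matrix.star_eq_conjTranspose, Matrix.reindex_apply, Matrix.conjTranspose_submatrix]
    rw [h, Matrix.reindex_apply, Matrix.reindex_apply, Matrix.submatrix_mul_equiv, A.2.2,
      Matrix.submatrix_one_equiv]⟩

@[simp] theorem uReindex_val {ι κ : Type} [Fintype ι] [DecidableEq ι] [Fintype κ] [DecidableEq κ]
    (e : ι ≃ κ) (A : Matrix.unitaryGroup ι ℂ) :
    (uReindex e A).1 = Matrix.reindex e e A.1 := rfl

theorem continuous_uReindex {ι κ : Type} [Fintype ι] [DecidableEq ι] [Fintype κ] [DecidableEq κ]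
    (e : ι ≃ κ) : Continuous (uReindex (e := e)) :=
  Continuous.subtype_mk ((continuous_subtype_val).matrix_reindex e e) _

@[simp] theorem uReindex_one {ι κ : Type} [Fintype ι] [DecidableEq ι] [Fintype κ] [DecidableEq κ]
    (e : ι ≃ κ) : uReindex e (1 : Matrix.unitaryGroup ι ℂ) = 1 :=
  Subtype.ext (by simp [uReindex, Matrix.reindex_apply, Matrix.submatrix_one_equiv])

/-- Transport along an equality of sizes. -/
def uCast {m k : ℕ} (h : m = k) (A : U m) : U k := uReindex (finCongr h) A

theorem continuous_uCast {m k : ℕ} (h : m = k) : Continuous (uCast h) :=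
  continuous_uReindex _

@[simp] theorem uCast_one {m k : ℕ} (h : m = k) : uCast h (1 : U m) = 1 := uReindex_one _

/-! ### Block sums and Kronecker products of unitary matrices -/

/-- The block sum `diag(A, B)` of unitary matrices, as an element of `U (m + n)`. -/
def bdiag2 {m n : ℕ} (A : U m) (B : U n) : U (m + n) :=
  ⟨Matrix.reindex finSumFinEquiv finSumFinEquiv (Matrix.fromBlocks A.1 0 0 B.1), by
    rw [Matrix.mem_unitaryGroup_iff]
    have h : star ((Matrix.reindex finSumFinEquiv finSumFinEquiv)
        (Matrix.fromBlocks A.1 0 0 B.1)) = Matrix.reindex finSumFinEquiv finSumFinEquiv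
        (star (Matrix.fromBlocks A.1 0 0 B.1)) := by
      simp [Matrix.star_eq_conjTranspose, Matrix.reindex_apply, Matrix.conjTranspose_submatrix]
    have hA : A.1 * A.1ᴴ = 1 := A.2.2
    have hB : B.1 * B.1ᴴ = 1 := B.2.2
    have h2 : Matrix.fromBlocks A.1 0 0 B.1 * star (Matrix.fromBlocks A.1 0 0 B.1) = 1 := by
      simp [Matrix.star_eq_conjTranspose, Matrix.fromBlocks_conjTranspose,
        Matrix.fromBlocks_multiply, hA, hB, Matrix.fromBlocks_one]
    rw [h, Matrix.reindex_apply, Matrix.reindex_apply, Matrix.submatrix_mul_equiv, h2,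
      Matrix.submatrix_one_equiv]⟩

@[simp] theorem bdiag2_one {m n : ℕ} : bdiag2 (1 : U m) (1 : U n) = 1 :=
  Subtype.ext (by simp [bdiag2, Matrix.fromBlocks_one, Matrix.reindex_apply,
    Matrix.submatrix_one_equiv])

theorem continuous_bdiag2 {m n : ℕ} :
    Continuous (fun p : U m × U n => bdiag2 p.1 p.2) := by
  apply Continuous.subtype_mk
  exact ((Continuous.matrix_fromBlocks (continuous_subtype_val.comp continuous_fst)
    continuous_const continuous_const
    (continuous_subtype_val.comp continuous_snd)).matrix_reindex _ _)

/-- The equivalence used to index an array of `r` blocks of size `n` by `Fin (r * n)`. -/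
def bde (r n : ℕ) : (Fin n × Fin r) ≃ Fin (r * n) :=
  (Equiv.prodComm (Fin n) (Fin r)).trans finProdFinEquiv

/-- The block-diagonal sum `diag(A 1, …, A r)` of a family of unitary matrices. -/
def blockDiagU {r n : ℕ} (A : Fin r → U n) : U (r * n) :=
  ⟨Matrix.reindex (bde r n) (bde r n) (Matrix.blockDiagonal fun j => (A j).1), by
    rw [Matrix.mem_unitaryGroup_iff]
    have h : star ((Matrix.reindex (bde r n) (bde r n))
        (Matrix.blockDiagonal fun j => (A j).1)) = Matrix.reindex (bde r n) (bde r n)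
        (star (Matrix.blockDiagonal fun j => (A j).1)) := by
      simp [Matrix.star_eq_conjTranspose, Matrix.reindex_apply, Matrix.conjTranspose_submatrix]
    have hA : ∀ j, (A j).1 * ((A j).1)ᴴ = 1 := fun j => (A j).2.2
    have h2 : (Matrix.blockDiagonal fun j => (A j).1) *
        star (Matrix.blockDiagonal fun j => (A j).1) = 1 := by
      rw [Matrix.star_eq_conjTranspose, Matrix.blockDiagonal_conjTranspose,
        ← Matrix.blockDiagonal_mul]
      have h1 : (fun k : Fin r => (A k).1 * ((A k).1)ᴴ) = (1 : Fin r → Matrix (Fin n) (Fin n) ℂ) :=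
        funext fun k => hA k
      rw [h1, Matrix.blockDiagonal_one]
    rw [h, Matrix.reindex_apply, Matrix.reindex_apply, Matrix.submatrix_mul_equiv, h2,
      Matrix.submatrix_one_equiv]⟩

@[simp] theorem blockDiagU_one {r n : ℕ} : blockDiagU (fun _ : Fin r => (1 : U n)) = 1 := by
  apply Subtype.ext
  have h1 : (fun _ : Fin r => ((1 : U n) : Matrix (Fin n) (Fin n) ℂ)) =
      (1 : Fin r → Matrix (Fin n) (Fin n) ℂ) := rfl
  show Matrix.reindex (bde r n) (bde r n) (Matrix.blockDiagonal _) = _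
  rw [h1, Matrix.blockDiagonal_one, Matrix.reindex_apply, Matrix.submatrix_one_equiv]
  rfl

theorem continuous_blockDiagU {X : Type} [TopologicalSpace X] {r n : ℕ} {A : X → Fin r → U n}
    (hA : ∀ j, Continuous fun x => A x j) : Continuous fun x => blockDiagU (A x) := by
  apply Continuous.subtype_mk
  exact (Continuous.matrix_blockDiagonal
    (continuous_pi fun j => (continuous_subtype_val.comp (hA j)))).matrix_reindex _ _

/-- The Kronecker product of unitary matrices, as an element of `U (m * n)`. -/
def kronU {m n : ℕ} (A : U m) (B : U n) : U (m * n) :=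
  ⟨Matrix.reindex finProdFinEquiv finProdFinEquiv (A.1 ⊗ₖ B.1), by
    rw [Matrix.mem_unitaryGroup_iff]
    have hstar : ∀ (C : Matrix (Fin m) (Fin m) ℂ) (D : Matrix (Fin n) (Fin n) ℂ),
        star (C ⊗ₖ D) = star C ⊗ₖ star D := by
      intro C D
      ext ⟨i, j⟩ ⟨k, l⟩
      simp [Matrix.star_eq_conjTranspose, Matrix.conjTranspose_apply,
        Matrix.kroneckerMap_apply, mul_comm]
    have h : star ((Matrix.reindex finProdFinEquiv finProdFinEquiv) (A.1 ⊗ₖ B.1)) =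
        Matrix.reindex finProdFinEquiv finProdFinEquiv (star (A.1 ⊗ₖ B.1)) := by
      simp [Matrix.star_eq_conjTranspose, Matrix.reindex_apply, Matrix.conjTranspose_submatrix]
    have h2 : (A.1 ⊗ₖ B.1) * star (A.1 ⊗ₖ B.1) = 1 := by
      rw [hstar, ← Matrix.mul_kronecker_mul, A.2.2, B.2.2, Matrix.one_kronecker_one]
    rw [h, Matrix.reindex_apply, Matrix.reindex_apply, Matrix.submatrix_mul_equiv, h2,
      Matrix.submatrix_one_equiv]⟩

@[simp] theorem kronU_one {m n : ℕ} : kronU (1 : U m) (1 : U n) = 1 :=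
  Subtype.ext (by simp [kronU, Matrix.one_kronecker_one, Matrix.reindex_apply,
    Matrix.submatrix_one_equiv])

theorem continuous_kronU {m n : ℕ} : Continuous fun p : U m × U n => kronU p.1 p.2 := by
  apply Continuous.subtype_mk
  apply Continuous.matrix_reindex _ finProdFinEquiv finProdFinEquiv
  apply continuous_matrix
  rintro ⟨i, j⟩ ⟨k, l⟩
  simp only [Matrix.kroneckerMap_apply]
  exact ((continuous_subtype_val.comp continuous_fst).matrix_elem i k).mul
    ((continuous_subtype_val.comp continuous_snd).matrix_elem j l)

/-! ### The induced map on homotopy groups -/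

/-- The map on generalized loops induced by a continuous basepoint-preserving map. -/
def loopMap {N : Type} {X Y : Type} [TopologicalSpace X] [TopologicalSpace Y]
    (f : C(X, Y)) {x : X} {y : Y} (hf : f x = y) (p : GenLoop N X x) : GenLoop N Y y :=
  ⟨f.comp p.1, fun t ht => by
    simp only [ContinuousMap.comp_apply]
    rw [p.2 t ht, hf]⟩

/-- The homomorphism `π_k(f)` induced on homotopy groups (based at the given points) by a
continuous basepoint-preserving map `f`, as a function. -/
def πMap (k : ℕ) {X Y : Type} [TopologicalSpace X] [TopologicalSpace Y]
    (f : C(X, Y)) {x : X} {y : Y} (hf : f x = y) :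
    HomotopyGroup (Fin k) X x → HomotopyGroup (Fin k) Y y :=
  Quotient.map (loopMap f hf)
    (fun _ _ h => h.elim fun H => ⟨H.compContinuousMap f⟩)

end Paper
/-! ### The standard stabilization and operation maps, as continuous maps -/

namespace Paper

/-- `est_{m,n} : U_m → U_{m+n}`, `A ↦ diag(A, I_n)`. -/
def est (m n : ℕ) : C(U m, U (m + n)) :=
  ⟨fun A => bdiag2 A 1, continuous_bdiag2.comp (continuous_id.prodMk continuous_const)⟩

theorem est_one (m n : ℕ) : est m n 1 = 1 := bdiag2_one

/-- `U_n → U_{m+n}`, `B ↦ diag(I_m, B)`. -/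
def est' (m n : ℕ) : C(U n, U (m + n)) :=
  ⟨fun B => bdiag2 1 B, continuous_bdiag2.comp (continuous_const.prodMk continuous_id)⟩

theorem est'_one (m n : ℕ) : est' m n 1 = 1 := bdiag2_one

/-- `s_j : U_n → U_{rn}` placing `A` in the `j`-th diagonal block (0-indexed) and identity
blocks elsewhere. -/
def sMap (n r : ℕ) (j : Fin r) : C(U n, U (r * n)) :=
  ⟨fun A => blockDiagU (fun k => if k = j then A else 1), by
    apply continuous_blockDiagU
    intro k
    by_cases hk : k = j
    · simp only [hk, if_true]; exact continuous_id
    · simp only [hk, if_false]; exact continuous_const⟩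

theorem sMap_one (n r : ℕ) (j : Fin r) : sMap n r j 1 = 1 := by
  show blockDiagU _ = 1
  have : (fun k : Fin r => if k = j then (1 : U n) else 1) = fun _ => (1 : U n) := by
    funext k; split <;> rfl
  rw [this, blockDiagU_one]

/-- The `r`-fold direct sum `⊕^r : U_n → U_{rn}`, `A ↦ diag(A, …, A)`. -/
def rSum (n r : ℕ) : C(U n, U (r * n)) :=
  ⟨fun A => blockDiagU (fun _ : Fin r => A), continuous_blockDiagU fun _ => continuous_id⟩

theorem rSum_one (n r : ℕ) : rSum n r 1 = 1 := blockDiagU_one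

/-- The direct sum `⊕ : U_m × U_n → U_{m+n}`, `(A, B) ↦ diag(A, B)`. -/
def dsum (m n : ℕ) : C(U m × U n, U (m + n)) :=
  ⟨fun p => bdiag2 p.1 p.2, continuous_bdiag2⟩

theorem dsum_one (m n : ℕ) : dsum m n 1 = 1 := bdiag2_one

/-- The tensor (Kronecker) product `⊗ : U_m × U_n → U_{mn}`. -/
def tens (m n : ℕ) : C(U m × U n, U (m * n)) :=
  ⟨fun p => kronU p.1 p.2, continuous_kronU⟩

theorem tens_one (m n : ℕ) : tens m n 1 = 1 := kronU_one

/-- `A ↦ A ⊗ I_n : U_m → U_{mn}`. -/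
def kronR (m n : ℕ) : C(U m, U (m * n)) :=
  ⟨fun A => kronU A 1, continuous_kronU.comp (continuous_id.prodMk continuous_const)⟩

/-- `A ↦ I_n ⊗ A : U_m → U_{mn}`. -/
def kronL (m n : ℕ) : C(U m, U (m * n)) :=
  ⟨fun A => uCast (Nat.mul_comm n m) (kronU 1 A),
    (continuous_uCast _).comp (continuous_kronU.comp (continuous_const.prodMk continuous_id))⟩

/-- The stabilization `σ : U_k → U_N`, `A ↦ diag(A, I_{N-k})`, for `k ≤ N`. -/
def sigmaMap (k N : ℕ) (h : k ≤ N) : C(U k, U N) :=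
  ⟨fun A => uCast (Nat.add_sub_cancel' h) (bdiag2 A 1),
    (continuous_uCast _).comp (continuous_bdiag2.comp (continuous_id.prodMk continuous_const))⟩

theorem sigmaMap_one (k N : ℕ) (h : k ≤ N) : sigmaMap k N h 1 = 1 := by
  show uCast _ (bdiag2 1 1) = 1
  rw [bdiag2_one, uCast_one]

/-- The `r`-fold Kronecker power `A ↦ A ⊗ ⋯ ⊗ A : U_k → U_{k^r}`. -/
def kronPow {k : ℕ} : (r : ℕ) → U k → U (k ^ r)
  | 0 => fun _ => uCast (pow_zero k).symm 1
  | r + 1 => fun A => uCast (pow_succ k r).symm (kronU (kronPow r A) A)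

theorem continuous_kronPow {k : ℕ} (r : ℕ) : Continuous fun A : U k => kronPow r A := by
  induction r with
  | zero => exact continuous_const
  | succ r ih =>
    show Continuous fun A : U k => uCast (pow_succ k r).symm (kronU (kronPow r A) A)
    exact (continuous_uCast _).comp (continuous_kronU.comp (ih.prodMk continuous_id))

theorem kronPow_one {k : ℕ} (r : ℕ) : kronPow r (1 : U k) = 1 := by
  induction r with
  | zero => exact uCast_one _
  | succ r ih =>
    show uCast _ (kronU (kronPow r 1) 1) = 1
    rw [ih, kronU_one, uCast_one]

/-- The `r`-fold Kronecker power as a continuous map. -/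
def kronPowC (n r : ℕ) : C(U n, U (n ^ r)) := ⟨kronPow r, continuous_kronPow r⟩

theorem kronPowC_one (n r : ℕ) : kronPowC n r 1 = 1 := kronPow_one r

end Paper
namespace Paper

/-- The `n`-fold direct sum `⊕^n : U_m → U_{mn}`, `A ↦ diag(A, …, A)`. -/
def nSumC (m n : ℕ) : C(U m, U (m * n)) :=
  ⟨fun A => uCast (Nat.mul_comm n m) (blockDiagU fun _ : Fin n => A),
    (continuous_uCast _).comp (continuous_blockDiagU fun _ => continuous_id)⟩

theorem nSumC_one (m n : ℕ) : nSumC m n 1 = 1 := by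
  show uCast _ (blockDiagU _) = 1
  rw [blockDiagU_one, uCast_one]

/-- The `m`-fold direct sum `⊕^m : U_n → U_{mn}`, `B ↦ diag(B, …, B)`. -/
def mSumC (m n : ℕ) : C(U n, U (m * n)) :=
  ⟨fun B => blockDiagU fun _ : Fin m => B, continuous_blockDiagU fun _ => continuous_id⟩

theorem mSumC_one (m n : ℕ) : mSumC m n 1 = 1 := blockDiagU_one

/-! ### Auxiliary lemmas: unitary group basics -/

theorem U_coe_mul {N : ℕ} (a b : U N) :
    ((a * b : U N) : Matrix (Fin N) (Fin N) ℂ) = a.1 * b.1 := rfl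

theorem U_coe_inv {N : ℕ} (a : U N) :
    ((a⁻¹ : U N) : Matrix (Fin N) (Fin N) ℂ) = star a.1 := rfl

theorem continuous_U_inv {N : ℕ} : Continuous fun a : U N => a⁻¹ :=
  Continuous.subtype_mk (continuous_star.comp continuous_subtype_val) _

/-- Pointwise product of generalized loops in the unitary group. -/
def mulLoop {M : Type} {N : ℕ} (p q : GenLoop M (U N) 1) : GenLoop M (U N) 1 :=
  ⟨⟨fun t => p t * q t, (map_continuous p.1).mul (map_continuous q.1)⟩,
    fun y hy => by
      have hp := p.2 y hy
      have hq := q.2 y hy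
      show p.1 y * q.1 y = 1
      rw [hp, hq, one_mul]⟩

@[simp] theorem mulLoop_apply {M : Type} {N : ℕ} (p q : GenLoop M (U N) 1) (t : M → I) :
    mulLoop p q t = p t * q t := rfl

theorem mulLoop_homotopic {M : Type} {N : ℕ} {p p' q q' : GenLoop M (U N) 1}
    (hp : GenLoop.Homotopic p p') (hq : GenLoop.Homotopic q q') :
    GenLoop.Homotopic (mulLoop p q) (mulLoop p' q') := by
  obtain ⟨H⟩ := hp
  obtain ⟨K⟩ := hq
  refine ⟨⟨⟨⟨fun ty => H ty * K ty, H.continuous.mul K.continuous⟩, ?_, ?_⟩, ?_⟩⟩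
  · intro y
    show H (0, y) * K (0, y) = _
    rw [H.apply_zero, K.apply_zero]; rfl
  · intro y
    show H (1, y) * K (1, y) = _
    rw [H.apply_one, K.apply_one]; rfl
  · intro t y hy
    show H (t, y) * K (t, y) = _
    rw [H.eq_fst t hy, K.eq_fst t hy]; rfl

/-- Eckmann–Hilton: the product in the homotopy group of the unitary group is induced by
pointwise multiplication of loops. -/
theorem quot_mulLoop {i N : ℕ} (p q : GenLoop (Fin (i + 1)) (U N) 1) :
    (⟦mulLoop p q⟧ : HomotopyGroup (Fin (i + 1)) (U N) 1) =
      ((· * ·) : _ → _ → HomotopyGroup (Fin (i + 1)) (U N) 1) ⟦p⟧ ⟦q⟧ := by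
  classical
  set i0 : Fin (i + 1) := 0 with hi0
  have key : GenLoop.transAt i0 q p =
      mulLoop (GenLoop.transAt i0 GenLoop.const p) (GenLoop.transAt i0 q GenLoop.const) := by
    refine GenLoop.ext _ _ fun t => ?_
    show _ = GenLoop.transAt i0 GenLoop.const p t * GenLoop.transAt i0 q GenLoop.const t
    simp only [GenLoop.transAt, GenLoop.coe_copy]
    split_ifs with h
    · show q _ = GenLoop.const _ * q _
      rw [GenLoop.const_apply, one_mul]
    · show p _ = p _ * GenLoop.const _
      rw [GenLoop.const_apply, mul_one]
  have h1 : (⟦GenLoop.transAt i0 GenLoop.const p⟧ : HomotopyGroup (Fin (i + 1)) (U N) 1)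
      = ⟦p⟧ := by
    rw [← HomotopyGroup.mul_spec (i := i0), ← HomotopyGroup.one_def]
    exact @mul_one (HomotopyGroup (Fin (i + 1)) (U N) 1) _ ⟦p⟧
  have h2 : (⟦GenLoop.transAt i0 q GenLoop.const⟧ : HomotopyGroup (Fin (i + 1)) (U N) 1)
      = ⟦q⟧ := by
    rw [← HomotopyGroup.mul_spec (i := i0), ← HomotopyGroup.one_def]
    exact @one_mul (HomotopyGroup (Fin (i + 1)) (U N) 1) _ ⟦q⟧
  rw [HomotopyGroup.mul_spec (i := i0), key]
  exact Quotient.sound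
    (mulLoop_homotopic (Quotient.exact h1).symm (Quotient.exact h2).symm)

theorem πMap_mk {k : ℕ} {X Y : Type} [TopologicalSpace X] [TopologicalSpace Y]
    (f : C(X, Y)) {x : X} {y : Y} (hf : f x = y) (p : GenLoop (Fin k) X x) :
    πMap k f hf ⟦p⟧ = ⟦loopMap f hf p⟧ := rfl

/-- Based homotopy invariance of the induced map on homotopy groups. -/
theorem πMap_congr {k : ℕ} {X Y : Type} [TopologicalSpace X] [TopologicalSpace Y]
    {f g : C(X, Y)} {x : X} {y : Y} (hf : f x = y) (hg : g x = y)
    (H : ContinuousMap.Homotopy f g) (hH : ∀ t, H (t, x) = y)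
    (z : HomotopyGroup (Fin k) X x) :
    πMap k f hf z = πMap k g hg z := by
  induction z using Quotient.inductionOn with
  | _ p =>
    refine Quotient.sound ⟨⟨⟨⟨fun ty => H (ty.1, p ty.2), ?_⟩, ?_, ?_⟩, ?_⟩⟩
    · exact H.continuous.comp (continuous_fst.prodMk
        ((map_continuous p.1).comp continuous_snd))
    · intro s
      show H (0, p s) = _
      rw [H.apply_zero]; rfl
    · intro s
      show H (1, p s) = _
      rw [H.apply_one]; rfl
    · intro t s hs
      have hb : p s = x := p.2 s hs
      show H (t, p s) = _
      rw [hb, hH t]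
      show y = f (p s)
      rw [hb, hf]

/-- Conjugation by an element joined to the identity does not change induced maps. -/
theorem πMap_conj_eq {k : ℕ} {X : Type} [TopologicalSpace X] {N : ℕ}
    {f g : C(X, U N)} {x₀ : X} (hf : f x₀ = 1) (hg : g x₀ = 1)
    (u : U N) (hu : Joined 1 u) (hfg : ∀ a, g a = u * f a * u⁻¹)
    (z : HomotopyGroup (Fin k) X x₀) :
    πMap k g hg z = πMap k f hf z := by
  obtain ⟨γ⟩ := hu
  have hcont : Continuous fun ta : I × X => γ ta.1 * f ta.2 * (γ ta.1)⁻¹ := by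
    have hγ : Continuous fun ta : I × X => γ ta.1 := γ.continuous.comp continuous_fst
    have hf2 : Continuous fun ta : I × X => f ta.2 := f.continuous.comp continuous_snd
    exact (hγ.mul hf2).mul (continuous_U_inv.comp hγ)
  refine (πMap_congr hf hg
    ⟨⟨fun ta => γ ta.1 * f ta.2 * (γ ta.1)⁻¹, hcont⟩, ?_, ?_⟩ ?_ z).symm
  · intro a
    show γ 0 * f a * (γ 0)⁻¹ = f a
    simp
  · intro a
    show γ 1 * f a * (γ 1)⁻¹ = g a
    simp [hfg a]
  · intro t
    show γ t * f x₀ * (γ t)⁻¹ = 1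
    rw [hf, mul_one, mul_inv_cancel]

/-! ### Permutation matrices and paths to the identity -/

/-- The permutation matrix of `e`, as a unitary matrix. -/
def permU {N : ℕ} (e : Equiv.Perm (Fin N)) : U N :=
  ⟨(1 : Matrix (Fin N) (Fin N) ℂ).submatrix e.symm _root_.id, by
    rw [Matrix.mem_unitaryGroup_iff]
    have hstar : star ((1 : Matrix (Fin N) (Fin N) ℂ).submatrix e.symm _root_.id) =
        (1 : Matrix (Fin N) (Fin N) ℂ).submatrix _root_.id e.symm := by
      rw [Matrix.star_eq_conjTranspose, Matrix.conjTranspose_submatrix,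
        Matrix.conjTranspose_one]
    rw [hstar]
    have h := Matrix.submatrix_mul_equiv (1 : Matrix (Fin N) (Fin N) ℂ)
      (1 : Matrix (Fin N) (Fin N) ℂ) (⇑e.symm) (Equiv.refl (Fin N)) (⇑e.symm)
    simp only [Equiv.coe_refl] at h
    calc (1 : Matrix (Fin N) (Fin N) ℂ).submatrix e.symm _root_.id *
          (1 : Matrix (Fin N) (Fin N) ℂ).submatrix _root_.id e.symm
        = ((1 : Matrix (Fin N) (Fin N) ℂ) * 1).submatrix e.symm e.symm := h
      _ = (1 : Matrix (Fin N) (Fin N) ℂ).submatrix e.symm e.symm := by rw [one_mul]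
      _ = 1 := Matrix.submatrix_one_equiv e.symm⟩

theorem permU_one {N : ℕ} : permU (1 : Equiv.Perm (Fin N)) = 1 := by
  apply Subtype.ext
  show (1 : Matrix (Fin N) (Fin N) ℂ).submatrix _ _ = 1
  have h : ⇑(1 : Equiv.Perm (Fin N)).symm = _root_.id := rfl
  rw [h]
  exact Matrix.submatrix_id_id _

theorem permU_mul {N : ℕ} (e τ : Equiv.Perm (Fin N)) :
    permU e * permU τ = permU (e * τ) := by
  apply Subtype.ext
  show (1 : Matrix (Fin N) (Fin N) ℂ).submatrix e.symm _root_.id *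
      (1 : Matrix (Fin N) (Fin N) ℂ).submatrix τ.symm _root_.id =
      (1 : Matrix (Fin N) (Fin N) ℂ).submatrix (e * τ).symm _root_.id
  ext i j
  rw [Matrix.mul_apply]
  simp only [Matrix.submatrix_apply, Matrix.one_apply]
  rw [Finset.sum_eq_single (e.symm i)]
  · have h : (e * τ).symm i = τ.symm (e.symm i) := rfl
    simp [h]
  · intro b _ hb
    simp [Ne.symm hb]
  · intro h; exact absurd (Finset.mem_univ _) h

theorem permU_star {N : ℕ} (e : Equiv.Perm (Fin N)) :
    star (permU e).1 = (permU e⁻¹).1 := by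
  show star ((1 : Matrix (Fin N) (Fin N) ℂ).submatrix e.symm _root_.id) =
    (1 : Matrix (Fin N) (Fin N) ℂ).submatrix (e⁻¹ : Equiv.Perm (Fin N)).symm _root_.id
  rw [Matrix.star_eq_conjTranspose, Matrix.conjTranspose_submatrix, Matrix.conjTranspose_one]
  ext i j
  simp only [Matrix.submatrix_apply, Matrix.one_apply, id_eq]
  have h : (i = e.symm j) ↔ ((e⁻¹ : Equiv.Perm (Fin N)).symm i = j) := by
    constructor
    · rintro rfl
      simp [Equiv.Perm.inv_def]
    · rintro rfl
      simp [Equiv.Perm.inv_def]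
  simp only [h]

/-- A self-adjoint unitary involution is joined to the identity. -/
theorem joined_one_of_selfadj {N : ℕ} (g : U N) (h1 : star g.1 = g.1) (h2 : g.1 * g.1 = 1) :
    Joined (1 : U N) g := by
  classical
  let θ : ℝ → ℝ := fun t => t * (Real.pi / 2)
  let a : ℝ → ℂ := fun t => Complex.exp (θ t * Complex.I) * (Real.cos (θ t) : ℂ)
  let b : ℝ → ℂ := fun t => -(Complex.exp (θ t * Complex.I) * Complex.I * (Real.sin (θ t) : ℂ))
  have expand : ∀ (x y x' y' : ℂ),
      (x • (1 : Matrix (Fin N) (Fin N) ℂ) + y • g.1) *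
        (x' • (1 : Matrix (Fin N) (Fin N) ℂ) + y' • g.1) =
      (x * x' + y * y') • (1 : Matrix (Fin N) (Fin N) ℂ) + (x * y' + y * x') • g.1 := by
    intro x y x' y'
    rw [add_mul, mul_add, mul_add, smul_mul_smul_comm, smul_mul_smul_comm,
      smul_mul_smul_comm, smul_mul_smul_comm]
    simp only [one_mul, mul_one]
    rw [h2, add_smul, add_smul]
    abel
  have hmem : ∀ t : ℝ, a t • (1 : Matrix (Fin N) (Fin N) ℂ) + b t • g.1 ∈
      Matrix.unitaryGroup (Fin N) ℂ := by
    intro t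
    rw [Matrix.mem_unitaryGroup_iff]
    have hconj : (starRingEnd ℂ) ((θ t : ℂ) * Complex.I) = -((θ t : ℂ) * Complex.I) := by
      simp only [_root_.map_mul, Complex.conj_I, Complex.conj_ofReal, mul_neg]
    have hsa : star (a t) = Complex.exp (-((θ t : ℂ) * Complex.I)) * (Real.cos (θ t) : ℂ) := by
      simp only [a, star_mul', Complex.star_def, ← Complex.exp_conj, hconj,
        Complex.conj_ofReal]
      try ring
    have hsb : star (b t) = Complex.exp (-((θ t : ℂ) * Complex.I)) * Complex.I *
        (Real.sin (θ t) : ℂ) := by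
      simp only [b, star_neg, star_mul', Complex.star_def, ← Complex.exp_conj, hconj,
        Complex.conj_ofReal, Complex.conj_I]
      try ring
    have hstarM : star (a t • (1 : Matrix (Fin N) (Fin N) ℂ) + b t • g.1) =
        star (a t) • (1 : Matrix (Fin N) (Fin N) ℂ) + star (b t) • g.1 := by
      rw [Matrix.star_eq_conjTranspose, Matrix.conjTranspose_add,
        Matrix.conjTranspose_smul, Matrix.conjTranspose_smul, Matrix.conjTranspose_one]
      rw [← Matrix.star_eq_conjTranspose, h1]
    rw [hstarM, expand]
    have hE : Complex.exp ((θ t : ℂ) * Complex.I) * Complex.exp (-((θ t : ℂ) * Complex.I)) = 1 := by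
      rw [← Complex.exp_add, add_neg_cancel, Complex.exp_zero]
    have hcs : (Real.cos (θ t) : ℂ) ^ 2 + (Real.sin (θ t) : ℂ) ^ 2 = 1 := by
      rw [← Complex.ofReal_pow, ← Complex.ofReal_pow, ← Complex.ofReal_add,
        Real.cos_sq_add_sin_sq, Complex.ofReal_one]
    have ha : a t * star (a t) + b t * star (b t) = 1 := by
      rw [hsa, hsb]
      simp only [a, b]
      have hI : Complex.I * Complex.I = -1 := Complex.I_mul_I
      linear_combination ((Real.cos (θ t) : ℂ) ^ 2) * hE +
        ((Real.sin (θ t) : ℂ) ^ 2) * hE + hcs -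
        (Complex.exp ((θ t : ℂ) * Complex.I) * Complex.exp (-((θ t : ℂ) * Complex.I)) *
          (Real.sin (θ t) : ℂ) ^ 2) * hI
    have hb : a t * star (b t) + b t * star (a t) = 0 := by
      rw [hsa, hsb]
      simp only [a, b]
      ring
    rw [ha, hb, one_smul, zero_smul, add_zero]
  have hγcont : Continuous fun t : I =>
      (⟨a (t : ℝ) • (1 : Matrix (Fin N) (Fin N) ℂ) + b (t : ℝ) • g.1, hmem t⟩ : U N) := by
    apply Continuous.subtype_mk
    have hθ : Continuous fun t : I => θ (t : ℝ) :=
      (continuous_mul_right _).comp continuous_subtype_val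
    have hE : Continuous fun t : I => Complex.exp ((θ (t : ℝ) : ℂ) * Complex.I) :=
      Complex.continuous_exp.comp ((Complex.continuous_ofReal.comp hθ).mul continuous_const)
    have hac : Continuous fun t : I => a (t : ℝ) :=
      hE.mul (Complex.continuous_ofReal.comp (Real.continuous_cos.comp hθ))
    have hbc : Continuous fun t : I => b (t : ℝ) :=
      ((hE.mul continuous_const).mul
        (Complex.continuous_ofReal.comp (Real.continuous_sin.comp hθ))).neg
    exact (hac.smul continuous_const).add (hbc.smul continuous_const)
  refine ⟨⟨⟨fun t => ⟨a (t : ℝ) • (1 : Matrix (Fin N) (Fin N) ℂ) + b (t : ℝ) • g.1, hmem t⟩,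
    hγcont⟩, ?_, ?_⟩⟩
  · apply Subtype.ext
    show a ((0 : I) : ℝ) • (1 : Matrix (Fin N) (Fin N) ℂ) + b ((0 : I) : ℝ) • g.1 = 1
    have ha0 : a 0 = 1 := by simp [a, θ]
    have hb0 : b 0 = 0 := by simp [b, θ]
    rw [Set.Icc.coe_zero, ha0, hb0, one_smul, zero_smul, add_zero]
  · apply Subtype.ext
    show a ((1 : I) : ℝ) • (1 : Matrix (Fin N) (Fin N) ℂ) + b ((1 : I) : ℝ) • g.1 = g.1
    have hθ1 : θ 1 = Real.pi / 2 := by simp [θ]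
    have ha1 : a 1 = 0 := by simp [a, hθ1, Real.cos_pi_div_two]
    have hb1 : b 1 = 1 := by
      simp only [b, hθ1, Real.sin_pi_div_two, Complex.ofReal_one, mul_one]
      rw [Complex.exp_mul_I, ← Complex.ofReal_cos, ← Complex.ofReal_sin,
        Real.cos_pi_div_two, Real.sin_pi_div_two]
      simp
    rw [Set.Icc.coe_one, ha1, hb1, zero_smul, one_smul, zero_add]

theorem joined_one_mul {N : ℕ} {x y : U N} (hx : Joined 1 x) (hy : Joined 1 y) :
    Joined (1 : U N) (x * y) := by
  obtain ⟨γ⟩ := hx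
  obtain ⟨δ⟩ := hy
  exact ⟨⟨⟨fun t => γ t * δ t, γ.continuous.mul δ.continuous⟩, by simp, by simp⟩⟩

theorem joined_one_permU {N : ℕ} (e : Equiv.Perm (Fin N)) : Joined (1 : U N) (permU e) := by
  refine Equiv.Perm.swap_induction_on e ?_ ?_
  · rw [permU_one]
  · intro f x y hxy ih
    rw [← permU_mul]
    refine joined_one_mul ?_ ih
    apply joined_one_of_selfadj
    · rw [permU_star, Equiv.swap_inv]
    · have h : permU (Equiv.swap x y) * permU (Equiv.swap x y) = 1 := by
        rw [permU_mul, Equiv.swap_mul_self, permU_one]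
      calc (permU (Equiv.swap x y)).1 * (permU (Equiv.swap x y)).1
          = ((permU (Equiv.swap x y) * permU (Equiv.swap x y) : U N) :
              Matrix (Fin N) (Fin N) ℂ) := rfl
        _ = ((1 : U N) : Matrix (Fin N) (Fin N) ℂ) := by rw [h]
        _ = 1 := rfl

/-! ### Identification of the various maps with Kronecker products -/

theorem uReindex_conj {N : ℕ} (e : Equiv.Perm (Fin N)) (M : U N) :
    uReindex (e : Fin N ≃ Fin N) M = permU e * M * (permU e)⁻¹ := by
  apply Subtype.ext
  have hstar : ((permU e)⁻¹ : U N).1 =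
      (1 : Matrix (Fin N) (Fin N) ℂ).submatrix _root_.id e.symm := by
    rw [U_coe_inv]
    show star ((1 : Matrix (Fin N) (Fin N) ℂ).submatrix e.symm _root_.id) = _
    rw [Matrix.star_eq_conjTranspose, Matrix.conjTranspose_submatrix,
      Matrix.conjTranspose_one]
  show (Matrix.reindex (e : Fin N ≃ Fin N) (e : Fin N ≃ Fin N) M.1 : Matrix _ _ ℂ)
      = (permU e).1 * M.1 * ((permU e)⁻¹ : U N).1
  rw [hstar]
  have h1 : (permU e).1 * M.1 = M.1.submatrix e.symm _root_.id := by
    have h := Matrix.submatrix_mul_equiv (1 : Matrix (Fin N) (Fin N) ℂ) M.1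
      (⇑e.symm) (Equiv.refl (Fin N)) _root_.id
    simp only [Equiv.coe_refl, Matrix.submatrix_id_id, one_mul] at h
    exact h
  have h2 : M.1.submatrix e.symm _root_.id *
      (1 : Matrix (Fin N) (Fin N) ℂ).submatrix _root_.id e.symm =
      M.1.submatrix e.symm e.symm := by
    have h := Matrix.submatrix_mul_equiv M.1 (1 : Matrix (Fin N) (Fin N) ℂ)
      (⇑e.symm) (Equiv.refl (Fin N)) (⇑e.symm)
    simp only [Equiv.coe_refl, mul_one] at h
    exact h
  rw [h1, h2, Matrix.reindex_apply]

theorem kronU_split {m n : ℕ} (A : U m) (B : U n) :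
    kronU A B = kronU A 1 * kronU 1 B := by
  apply Subtype.ext
  rw [U_coe_mul]
  show (Matrix.reindex finProdFinEquiv finProdFinEquiv (A.1 ⊗ₖ B.1) : Matrix _ _ ℂ) =
      Matrix.reindex finProdFinEquiv finProdFinEquiv
        (A.1 ⊗ₖ (1 : Matrix (Fin n) (Fin n) ℂ)) *
      Matrix.reindex finProdFinEquiv finProdFinEquiv
        ((1 : Matrix (Fin m) (Fin m) ℂ) ⊗ₖ B.1)
  rw [Matrix.reindex_apply, Matrix.reindex_apply, Matrix.reindex_apply,
    Matrix.submatrix_mul_equiv, ← Matrix.mul_kronecker_mul]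
  show (A.1 ⊗ₖ B.1).submatrix _ _ = ((A.1 * 1) ⊗ₖ ((1 : Matrix (Fin n) (Fin n) ℂ) * B.1)).submatrix _ _
  rw [mul_one, one_mul]

theorem mSum_eq_kron {m n : ℕ} (B : U n) : mSumC m n B = kronU (1 : U m) B := by
  apply Subtype.ext
  show (Matrix.reindex (bde m n) (bde m n) (Matrix.blockDiagonal fun _ : Fin m => B.1)
      : Matrix _ _ ℂ) =
    Matrix.reindex finProdFinEquiv finProdFinEquiv
      ((1 : Matrix (Fin m) (Fin m) ℂ) ⊗ₖ B.1)
  ext i j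
  simp only [Matrix.reindex_apply, Matrix.submatrix_apply, bde, Equiv.symm_trans_apply,
    Equiv.prodComm_symm, Equiv.prodComm_apply, Matrix.blockDiagonal_apply,
    Matrix.kroneckerMap_apply, Prod.fst_swap, Prod.snd_swap, Matrix.one_apply, ite_mul,
    one_mul, zero_mul]

theorem kron_one_as_blockDiag {m n : ℕ} (A : U m) :
    A.1 ⊗ₖ (1 : Matrix (Fin n) (Fin n) ℂ) =
      Matrix.blockDiagonal (fun _ : Fin n => A.1) := by
  ext ik jl
  simp only [Matrix.kroneckerMap_apply, Matrix.blockDiagonal_apply, Matrix.one_apply,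
    mul_ite, mul_one, mul_zero]

/-- The shuffle permutation relating `A ↦ A ⊗ I` to `A ↦ diag(A, …, A)`. -/
def shuffle (m n : ℕ) : Equiv.Perm (Fin (m * n)) :=
  (finProdFinEquiv.symm : Fin (m * n) ≃ Fin m × Fin n).trans
    ((bde n m).trans (finCongr (Nat.mul_comm n m)))

theorem nSum_eq_shuffle {m n : ℕ} (A : U m) :
    nSumC m n A = uReindex ((shuffle m n : Equiv.Perm (Fin (m * n))) :
      Fin (m * n) ≃ Fin (m * n)) (kronU A (1 : U n)) := by
  apply Subtype.ext
  rw [uReindex_val]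
  show (Matrix.reindex (finCongr (Nat.mul_comm n m)) (finCongr (Nat.mul_comm n m))
      ((Matrix.reindex (bde n m) (bde n m)) (Matrix.blockDiagonal fun _ : Fin n => A.1))
      : Matrix _ _ ℂ) =
    Matrix.reindex _ _ ((Matrix.reindex finProdFinEquiv finProdFinEquiv
      (A.1 ⊗ₖ (1 : Matrix (Fin n) (Fin n) ℂ))) : Matrix _ _ ℂ)
  rw [kron_one_as_blockDiag]
  have hidx : ∀ i : Fin (m * n), (finProdFinEquiv.symm : Fin (m * n) ≃ Fin m × Fin n)
      ((shuffle m n).symm i) = (bde n m).symm ((finCongr (Nat.mul_comm n m)).symm i) := by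
    intro i
    simp [shuffle, Equiv.symm_trans_apply]
  ext i j
  simp only [Matrix.reindex_apply, Matrix.submatrix_apply]
  rw [hidx i, hidx j]

theorem kronR_one (m n : ℕ) : kronR m n 1 = 1 := kronU_one

theorem πMap_nSum_eq_kronR (m n : ℕ) (k : ℕ) (z : HomotopyGroup (Fin k) (U m) 1) :
    πMap k (nSumC m n) (nSumC_one m n) z = πMap k (kronR m n) (kronR_one m n) z := by
  refine πMap_conj_eq (kronR_one m n) (nSumC_one m n) (permU (shuffle m n))
    (joined_one_permU _) ?_ z
  intro A
  have h := nSum_eq_shuffle (n := n) A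
  rw [uReindex_conj] at h
  exact h


/-- For every `i ≥ 1` (written `i + 1`), the Kronecker product
`⊗ : U_m × U_n → U_{mn}` satisfies `π_i(⊗)(x, y) = π_i(⊕^n)(x) · π_i(⊕^m)(y)`, where `(x, y)`
corresponds to `z ∈ π_i(U_m × U_n)` via the projections. -/
theorem tens_induced_eq_mul (m n : ℕ) (hm : 0 < m) (hn : 0 < n) (i : ℕ)
    (z : HomotopyGroup (Fin (i + 1)) (U m × U n) 1) :
    πMap (i + 1) (tens m n) (tens_one m n) z =
      πMap (i + 1) (nSumC m n) (nSumC_one m n)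
        (πMap (i + 1) (ContinuousMap.fst : C(U m × U n, U m)) rfl z) *
      πMap (i + 1) (mSumC m n) (mSumC_one m n)
        (πMap (i + 1) (ContinuousMap.snd : C(U m × U n, U n)) rfl z) := by
  induction z using Quotient.inductionOn with
  | _ p =>
    have hL : loopMap (tens m n) (tens_one m n) p =
        mulLoop
          (loopMap (kronR m n) (kronR_one m n)
            (loopMap (ContinuousMap.fst : C(U m × U n, U m)) rfl p))
          (loopMap (mSumC m n) (mSumC_one m n)
            (loopMap (ContinuousMap.snd : C(U m × U n, U n)) rfl p)) := by
      refine GenLoop.ext _ _ fun t => ?_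
      show tens m n (p t) = kronR m n ((p t).1) * mSumC m n ((p t).2)
      show kronU (p t).1 (p t).2 = kronU (p t).1 1 * mSumC m n ((p t).2)
      rw [mSum_eq_kron, ← kronU_split]
    rw [πMap_nSum_eq_kronR]
    show (⟦loopMap (tens m n) (tens_one m n) p⟧ :
      HomotopyGroup (Fin (i + 1)) (U (m * n)) 1) = _
    rw [hL]
    exact quot_mulLoop _ _

end Paper
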